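/- Let (g, ⟨,⟩) be a pseudo-Riemannian flat Lie algebra with modular vector h defined by ⟨h, u⟩ = tr(ad_u) for all u. Then h ∈ [g,g] ∩ [g,g]^⊥. In particular, if g is nonunimodular then the derived ideal [g,g] is degenerate and ⟨h,h⟩ = 0. -/

import Mathlib

open LinearMap Module

universe u

/-- The trace of a linear map that is skew-adjoint with respect to a nondegenerate
bilinear form is zero. -/
private lemma trace_eq_zero_of_skew {V : Type u} [AddCommGroup V] [Module ℝ V]
    [FiniteDimensional ℝ V] (B : LinearMap.BilinForm ℝ V) (hnd : B.Nondegenerate)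
    (f : V →ₗ[ℝ] V) (hsk : ∀ x y, B (f x) y = - B x (f y)) :
    LinearMap.trace ℝ V f = 0 := by
  have hconj : (B.toDual hnd).conj f = - Module.Dual.transpose (R := ℝ) f := by
    apply LinearMap.ext; intro φ
    apply LinearMap.ext; intro w
    have h1 : ((B.toDual hnd).conj f) φ w = B (f ((B.toDual hnd).symm φ)) w := by
      simp [LinearEquiv.conj_apply]
      rfl
    rw [h1, hsk]
    have h2 : B ((B.toDual hnd).symm φ) (f w) = φ (f w) :=
      LinearMap.BilinForm.apply_toDual_symm_apply (hB := hnd) φ (f w)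
    rw [h2]
    simp [Module.Dual.transpose_apply]
  have h3 : LinearMap.trace ℝ _ ((B.toDual hnd).conj f) = LinearMap.trace ℝ V f :=
    LinearMap.trace_conj' f (B.toDual hnd)
  rw [hconj] at h3
  have h4 := LinearMap.map_neg (LinearMap.trace ℝ (Module.Dual ℝ V))
    (Module.Dual.transpose (R := ℝ) f)
  rw [h4, LinearMap.trace_transpose'] at h3
  linarith

/-- An endomorphism of a finite-dimensional real vector space all of whose power traces
(for positive powers) vanish is nilpotent.  Proved by induction on the dimension, using
the trace of the Cayley–Hamilton identity to produce a kernel vector, and passing to the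
range. -/
private lemma isNilpotent_of_trace_pow :
    ∀ (n : ℕ) (V : Type u) [AddCommGroup V] [Module ℝ V] [FiniteDimensional ℝ V],
      finrank ℝ V ≤ n → ∀ F : V →ₗ[ℝ] V,
      (∀ k : ℕ, 1 ≤ k → LinearMap.trace ℝ V (F ^ k) = 0) → IsNilpotent F := by
  intro n
  induction n with
  | zero =>
    intro V _ _ _ hV F _
    have h0 : finrank ℝ V = 0 := Nat.le_zero.mp hV
    have : Subsingleton V := Module.finrank_zero_iff.mp h0
    exact ⟨1, by rw [pow_one]; exact Subsingleton.elim F 0⟩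
  | succ n ih =>
    intro V _ _ _ hV F hF
    by_cases h0 : finrank ℝ V = 0
    · have : Subsingleton V := Module.finrank_zero_iff.mp h0
      exact ⟨1, by rw [pow_one]; exact Subsingleton.elim F 0⟩
    -- trace of Cayley–Hamilton gives vanishing constant coefficient
    have hd : F.charpoly.natDegree = finrank ℝ V := F.charpoly_natDegree
    have hCH : (Polynomial.aeval F) F.charpoly = 0 := F.aeval_self_charpoly
    have hsum : (Polynomial.aeval F) F.charpoly =
        ∑ i ∈ Finset.range (F.charpoly.natDegree + 1), F.charpoly.coeff i • F ^ i :=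
      Polynomial.aeval_eq_sum_range F
    have htr : (∑ i ∈ Finset.range (F.charpoly.natDegree + 1),
        F.charpoly.coeff i * LinearMap.trace ℝ V (F ^ i)) = 0 := by
      have := congrArg (LinearMap.trace ℝ V) (hsum.symm.trans hCH)
      rw [map_sum, map_zero] at this
      simpa [smul_eq_mul] using this
    have hc0 : F.charpoly.coeff 0 * (finrank ℝ V : ℝ) = 0 := by
      rw [Finset.sum_eq_single_of_mem 0 (Finset.mem_range.mpr (by omega))
        (fun i _ hne => by rw [hF i (Nat.one_le_iff_ne_zero.mpr hne), mul_zero])] at htr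
      rw [pow_zero, LinearMap.trace_one] at htr
      exact htr
    have hc0' : F.charpoly.coeff 0 = 0 := by
      have : (finrank ℝ V : ℝ) ≠ 0 := Nat.cast_ne_zero.mpr h0
      exact (mul_eq_zero.mp hc0).resolve_right this
    have hdet : LinearMap.det F = 0 := by
      rw [LinearMap.det_eq_sign_charpoly_coeff, hc0', mul_zero]
    have hker : ⊥ < LinearMap.ker F := LinearMap.bot_lt_ker_of_det_eq_zero hdet
    have hkpos : 0 < finrank ℝ (LinearMap.ker F) :=
      Nat.pos_of_ne_zero (fun hh => hker.ne' (Submodule.finrank_eq_zero.mp hh))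
    have hrn := LinearMap.finrank_range_add_finrank_ker F
    have hlt : finrank ℝ (LinearMap.range F) ≤ n := by omega
    set ι : LinearMap.range F →ₗ[ℝ] V := (LinearMap.range F).subtype with hι
    set π : V →ₗ[ℝ] LinearMap.range F := F.rangeRestrict with hπ
    have hιπ : ι ∘ₗ π = F := by ext x; rfl
    set F' : LinearMap.range F →ₗ[ℝ] LinearMap.range F := π ∘ₗ ι with hF'
    have hpow : ∀ k, F ^ (k + 1) = ι ∘ₗ (F' ^ k) ∘ₗ π := by
      intro k
      induction k with
      | zero => rw [pow_one, pow_zero, Module.End.one_eq_id, LinearMap.id_comp, hιπ]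
      | succ k ihk =>
        rw [pow_succ, Module.End.mul_eq_comp, ihk, pow_succ, Module.End.mul_eq_comp]
        ext x
        simp only [LinearMap.comp_apply]
        rfl
    have htr' : ∀ k : ℕ, 1 ≤ k → LinearMap.trace ℝ (LinearMap.range F) (F' ^ k) = 0 := by
      intro k hk
      obtain ⟨j, rfl⟩ : ∃ j, k = j + 1 := ⟨k - 1, by omega⟩
      have e1 : F' ^ (j + 1) = ((F' ^ j) ∘ₗ π) ∘ₗ ι := by
        rw [pow_succ, Module.End.mul_eq_comp, hF']
        simp only [LinearMap.comp_assoc]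
      rw [e1, LinearMap.trace_comp_comm' ι ((F' ^ j) ∘ₗ π), ← hpow j]
      exact hF (j + 1) (by omega)
    obtain ⟨K, hK⟩ := ih (LinearMap.range F) hlt F' htr'
    exact ⟨K + 1, by rw [hpow K, hK]; simp⟩

/-- In a pseudo-Riemannian flat Lie algebra, the modular vector `h`
(defined by `⟨h,u⟩ = tr(ad_u)`) lies in `[g,g] ∩ [g,g]^⊥`. In particular, if `g` is
nonunimodular (`h ≠ 0`) then `[g,g]` is degenerate and `⟨h,h⟩ = 0`. -/
theorem modular_vector_in_derived_and_orthogonal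
    (g : Type*) [LieRing g] [LieAlgebra ℝ g] [FiniteDimensional ℝ g]
    (B : LinearMap.BilinForm ℝ g)
    (hsymm : ∀ x y, B x y = B y x)
    (hnd : B.Nondegenerate)
    (m : g →ₗ[ℝ] g →ₗ[ℝ] g)
    (koszul : ∀ u v w, 2 * B (m u v) w = B ⁅u, v⁆ w + B ⁅w, u⁆ v + B ⁅w, v⁆ u)
    (hflat : ∀ u v x, m ⁅u, v⁆ x = m u (m v x) - m v (m u x))
    (h : g) (hmod : ∀ u, B h u = LinearMap.trace ℝ g (LieAlgebra.ad ℝ g u)) :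
    h ∈ LieAlgebra.derivedSeries ℝ g 1 ∧
    (∀ x y : g, B ⁅x, y⁆ h = 0) ∧
    (h ≠ 0 →
      B h h = 0 ∧
      ∃ v, v ∈ LieAlgebra.derivedSeries ℝ g 1 ∧ v ≠ 0 ∧
        ∀ w ∈ LieAlgebra.derivedSeries ℝ g 1, B v w = 0) := by
  classical
  -- antisymmetry of the bracket inside `B`
  have skB : ∀ a b c : g, B ⁅a, b⁆ c = - B ⁅b, a⁆ c := by
    intro a b c
    rw [← lie_skew a b, LinearMap.map_neg B, LinearMap.neg_apply]
  -- metric property of the Levi-Civita product: `L_u` is skew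
  have skw : ∀ u v w : g, B (m u v) w = - B (m u w) v := by
    intro u v w
    have k1 := koszul u v w
    have k2 := koszul u w v
    have s1 := skB u v w
    have s2 := skB w u v
    have s3 := skB w v u
    linarith
  -- torsion-freeness
  have tor : ∀ u v : g, m u v - m v u = ⁅u, v⁆ := by
    intro u v
    have h0 : ∀ w, B (m u v - m v u - ⁅u, v⁆) w = 0 := by
      intro w
      have k1 := koszul u v w
      have k2 := koszul v u w
      have s1 := skB u v w
      simp only [map_sub, LinearMap.sub_apply]
      linarith
    exact sub_eq_zero.mp (hnd.1 _ h0)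
  -- the key analytic fact:  z ⊥ [g,g]  ⟹  tr (ad z) = 0
  have key : ∀ z : g, (∀ x y : g, B ⁅x, y⁆ z = 0) →
      LinearMap.trace ℝ g (LieAlgebra.ad ℝ g z) = 0 := by
    intro z hz
    -- right multiplication by z is self-adjoint
    have sa : ∀ u v : g, B (m u z) v = B (m v z) u := by
      intro u v
      have k1 := koszul u z v
      have k2 := koszul v z u
      have h1 := hz u v
      have h2 := hz v u
      linarith
    -- z · z = 0
    have mzz : m z z = 0 := by
      apply hnd.1
      intro v
      have h1 : B (m v z) z = 0 := by have := skw v z z; linarith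
      have h2 := sa z v
      linarith
    set Lz : Module.End ℝ g := m z with hLz
    set P : Module.End ℝ g := m.flip z with hP
    have hPapp : ∀ u, P u = m u z := fun u => rfl
    have hLapp : ∀ u, Lz u = m z u := fun u => rfl
    -- the flatness identity P² = P L - L P
    have hE6 : P * P = P * Lz - Lz * P := by
      ext v
      have hfl := hflat v z z
      rw [mzz, map_zero, zero_sub] at hfl
      have htz := tor v z
      have h1 : m (m v z - m z v) z = - m z (m v z) := by rw [htz, hfl]
      simp only [map_sub, LinearMap.sub_apply] at h1
      simp only [Module.End.mul_apply, LinearMap.sub_apply, hPapp, hLapp]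
      have := sub_eq_iff_eq_add.mp h1
      rw [this]
      abel
    -- all power traces of P of order ≥ 2 vanish
    have htrpow : ∀ k : ℕ, 2 ≤ k → LinearMap.trace ℝ g (P ^ k) = 0 := by
      intro k hk
      obtain ⟨j, rfl⟩ : ∃ j, k = j + 2 := ⟨k - 2, by omega⟩
      have h1 : P ^ (j + 2) = P ^ j * (P * Lz) - P ^ j * (Lz * P) := by
        rw [pow_add, pow_two, hE6, mul_sub]
      have e1 : P ^ j * (P * Lz) = P ^ (j + 1) * Lz := by
        rw [← mul_assoc, ← pow_succ]
      have e2 : LinearMap.trace ℝ g (P ^ j * (Lz * P)) =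
          LinearMap.trace ℝ g (P ^ (j + 1) * Lz) := by
        rw [← mul_assoc, LinearMap.trace_mul_comm, ← mul_assoc, ← pow_succ']
      rw [h1, map_sub, e1, e2, sub_self]
    -- P is nilpotent
    have hPnil : IsNilpotent P := by
      obtain ⟨K, hK⟩ := isNilpotent_of_trace_pow (finrank ℝ g) g le_rfl (P * P)
        (fun k hk => by
          rw [← pow_two, ← pow_mul]
          exact htrpow (2 * k) (by omega))
      exact ⟨2 * K, by rw [pow_mul, pow_two]; exact hK⟩
    have htrP : LinearMap.trace ℝ g P = 0 :=
      (LinearMap.isNilpotent_trace_of_isNilpotent hPnil).eq_zero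
    -- L_z is skew, so has trace zero
    have hskLz : ∀ x y, B (Lz x) y = - B x (Lz y) := by
      intro x y
      have h1 := skw z x y
      have h2 := hsymm x (m z y)
      simp only [hLapp]
      linarith
    have htrLz : LinearMap.trace ℝ g Lz = 0 := trace_eq_zero_of_skew B hnd Lz hskLz
    -- ad z = L_z - P
    have hadz : (LieAlgebra.ad ℝ g z : Module.End ℝ g) = Lz - P := by
      ext u
      simp only [LieAlgebra.ad_apply, LinearMap.sub_apply, hPapp, hLapp]
      exact (tor z u).symm
    rw [hadz, map_sub, htrLz, htrP, sub_zero]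
  -- derived series as a submodule
  have hds : LieAlgebra.derivedSeries ℝ g 1 = ⁅(⊤ : LieIdeal ℝ g), (⊤ : LieIdeal ℝ g)⁆ := by
    rw [LieAlgebra.derivedSeries_def, LieAlgebra.derivedSeriesOfIdeal_succ,
      LieAlgebra.derivedSeriesOfIdeal_zero]
  set DS : Submodule ℝ g :=
    (⁅(⊤ : LieIdeal ℝ g), (⊤ : LieIdeal ℝ g)⁆ : LieIdeal ℝ g).toSubmodule with hDS
  have hsp : DS = Submodule.span ℝ
      { x : g | ∃ a ∈ (⊤ : LieIdeal ℝ g), ∃ b ∈ (⊤ : LieIdeal ℝ g), ⁅a, b⁆ = x } :=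
    LieSubmodule.lieIdeal_oper_eq_linear_span' ⊤ ⊤
  have hmem : ∀ x : g, x ∈ LieAlgebra.derivedSeries ℝ g 1 ↔ x ∈ DS := by
    intro x
    rw [hds]
    exact Iff.rfl
  have hbr : ∀ x y : g, ⁅x, y⁆ ∈ DS :=
    fun x y => LieSubmodule.lie_mem_lie (LieSubmodule.mem_top _) (LieSubmodule.mem_top _)
  -- part 2 : h ⊥ [g,g]
  have part2 : ∀ x y : g, B ⁅x, y⁆ h = 0 := by
    intro x y
    rw [hsymm, hmod]
    have hadlie : (LieAlgebra.ad ℝ g ⁅x, y⁆ : Module.End ℝ g) =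
        (LieAlgebra.ad ℝ g x) * (LieAlgebra.ad ℝ g y) -
          (LieAlgebra.ad ℝ g y) * (LieAlgebra.ad ℝ g x) := by
      ext z; simp only [LieAlgebra.ad_apply, LinearMap.sub_apply, Module.End.mul_apply, lie_lie]
    rw [hadlie, map_sub, LinearMap.trace_mul_comm, sub_self]
  -- part 1 : h ∈ [g,g]
  have part1 : h ∈ LieAlgebra.derivedSeries ℝ g 1 := by
    rw [hmem]
    have hdd : DS = DS.dualAnnihilator.dualCoannihilator :=
      Subspace.dualAnnihilator_dualCoannihilator_eq.symm
    rw [hdd, Submodule.mem_dualCoannihilator]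
    intro φ hφ
    rw [Submodule.mem_dualAnnihilator] at hφ
    set z : g := (B.toDual hnd).symm φ with hzdef
    have hBz : ∀ v, B z v = φ v := fun v =>
      LinearMap.BilinForm.apply_toDual_symm_apply (hB := hnd) φ v
    have hz : ∀ x y : g, B ⁅x, y⁆ z = 0 := by
      intro x y
      rw [hsymm, hBz]
      exact hφ _ (hbr x y)
    calc φ h = B z h := (hBz h).symm
      _ = B h z := hsymm z h
      _ = LinearMap.trace ℝ g (LieAlgebra.ad ℝ g z) := hmod z
      _ = 0 := key z hz
  refine ⟨part1, part2, fun hne => ?_⟩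
  have hBh : ∀ w ∈ DS, B h w = 0 := by
    have hker : DS ≤ LinearMap.ker (B h) := by
      rw [hsp, Submodule.span_le]
      rintro w ⟨x, -, y, -, rfl⟩
      simp only [SetLike.mem_coe, LinearMap.mem_ker]
      rw [hsymm]
      exact part2 x y
    intro w hw
    exact hker hw
  exact ⟨hBh h ((hmem h).mp part1), h, part1, hne, fun w hw => hBh w ((hmem w).mp hw)⟩
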